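/- arXiv:1402.1993 — 3 statements merged into one kernel-verified Lean document; each statement's English description precedes it below -/
import Mathlib

section
/- The map A is a contraction on the triangle T with Lipschitz constant √3/2: for all p₁, p₂ ∈ T, |A p₁ − A p₂| ≤ (√3/2)|p₁ − p₂| in the Euclidean norm. -/
noncomputable def expA (p : ℝ × ℝ) : ℝ × ℝ :=
  (p.1 / (2 * (p.1 + 1)), (p.1 + p.2 + 1) / (2 * (p.1 + 1)))

def T : Set (ℝ × ℝ) :=
  {p | 0 ≤ p.1 ∧ p.1 ≤ 1/2 ∧ 1/2 ≤ p.2 ∧ p.2 ≤ 1 ∧ p.1 + p.2 ≤ 1}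

set_option maxHeartbeats 1000000 in
lemma key (k l k' l' : ℝ) (hk0 : 0 ≤ k) (hk1 : k ≤ 1/2)
    (hk0' : 0 ≤ k') (hk1' : k' ≤ 1/2) (hl0' : 1/2 ≤ l') (hl1' : l' ≤ 1)
    (hs' : k' + l' ≤ 1) :
    (k / (2 * (k + 1)) - k' / (2 * (k' + 1)))^2
      + ((k + l + 1) / (2 * (k + 1)) - (k' + l' + 1) / (2 * (k' + 1)))^2
      ≤ 3/4 * ((k - k')^2 + (l - l')^2) := by
  have hkp : (0:ℝ) < k + 1 := by linarith
  have hkp' : (0:ℝ) < k' + 1 := by linarith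
  have e1 : k / (2 * (k + 1)) - k' / (2 * (k' + 1))
      = (k - k') / (2 * (k + 1) * (k' + 1)) := by
    field_simp; ring
  have e2 : (k + l + 1) / (2 * (k + 1)) - (k' + l' + 1) / (2 * (k' + 1))
      = ((l - l') * (k' + 1) - l' * (k - k')) / (2 * (k + 1) * (k' + 1)) := by
    field_simp; ring
  rw [e1, e2, div_pow, div_pow]
  set u := k - k'
  set v := l - l'
  clear_value u v
  have hD : (0:ℝ) < (2 * (k + 1) * (k' + 1))^2 := by positivity
  rw [← add_div, div_le_iff₀ hD]
  have hlk : 0 ≤ l' * (k' + 1) := by nlinarith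
  have h1 : l' * (k' + 1) ≤ 1 := by nlinarith
  have h2 : (1:ℝ) ≤ (k + 1)^2 := by nlinarith
  have h3 : (1:ℝ) ≤ (k' + 1)^2 := by nlinarith
  have hm : (0:ℝ) ≤ ((k+1)^2 - 1) * (k'+1)^2 :=
    mul_nonneg (by linarith) (sq_nonneg _)
  have hq : (1:ℝ) ≤ (k+1)^2*(k'+1)^2 := by nlinarith
  have hq2 : (k'+1)^2 ≤ (k+1)^2*(k'+1)^2 := by nlinarith
  nlinarith [mul_nonneg hlk (sq_nonneg (u + v)), mul_nonneg hlk (sq_nonneg (u - v)),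
    mul_nonneg (sq_nonneg u) (sub_nonneg.2 hq),
    mul_nonneg (sq_nonneg v) (sub_nonneg.2 hq2),
    mul_nonneg (sq_nonneg u) (sub_nonneg.2 h1),
    mul_nonneg (sq_nonneg v) (sub_nonneg.2 h1),
    mul_nonneg (sq_nonneg u) (by nlinarith : (0:ℝ) ≤ 1 - l'^2),
    mul_nonneg (sq_nonneg v) (by nlinarith : (0:ℝ) ≤ (k'+1)^2 - 1)]

theorem stmt_2 (p₁ p₂ : ℝ × ℝ) (h₁ : p₁ ∈ T) (h₂ : p₂ ∈ T) :
    Real.sqrt (((expA p₁).1 - (expA p₂).1)^2 + ((expA p₁).2 - (expA p₂).2)^2)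
      ≤ (Real.sqrt 3 / 2) *
        Real.sqrt ((p₁.1 - p₂.1)^2 + (p₁.2 - p₂.2)^2) := by
  obtain ⟨hk0, hk1, hl0, hl1, hs⟩ := h₁
  obtain ⟨hk0', hk1', hl0', hl1', hs'⟩ := h₂
  have key' := key p₁.1 p₁.2 p₂.1 p₂.2 hk0 hk1 hk0' hk1' hl0' hl1' hs'
  have h34 : Real.sqrt 3 / 2 = Real.sqrt (3/4) := by
    rw [show (3:ℝ)/4 = 3 / 2^2 by norm_num, Real.sqrt_div' 3 (by norm_num),
      Real.sqrt_sq (by norm_num : (0:ℝ) ≤ 2)]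
  rw [h34, ← Real.sqrt_mul (by norm_num : (0:ℝ) ≤ 3/4)]
  apply Real.sqrt_le_sqrt
  simpa [expA] using key'
end

section
/- The map BA = B ∘ A is a contraction on the triangle T with Lipschitz constant √3/2: for all p₁, p₂ ∈ T, |BA p₁ − BA p₂| ≤ (√3/2)|p₁ − p₂|. -/
noncomputable def expB (p : ℝ × ℝ) : ℝ × ℝ := (p.2 - 1/2, p.1 + 1/2)

noncomputable def expBA (p : ℝ × ℝ) : ℝ × ℝ := expB (expA p)

lemma aux_contract (u v a b c : ℝ) (ha : 1 ≤ a) (hb0 : 0 ≤ b) (hb : b ≤ 1) (hc : 1 ≤ c) :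
    u^2 + (v*a - b*u)^2 ≤ 3 * (u^2+v^2) * c^2 * a^2 := by
  have hX : 0 ≤ u^2 + v^2 := by positivity
  have h1 : (v*a - b*u)^2 ≤ (u^2+v^2)*(a^2+b^2) := by nlinarith [sq_nonneg (v*b + u*a)]
  have h2 : u^2 + (u^2+v^2)*(a^2+b^2) ≤ (u^2+v^2)*(1+a^2+b^2) := by nlinarith [sq_nonneg v]
  have h3 : (u^2+v^2)*(1+a^2+b^2) ≤ (u^2+v^2)*(3*a^2) := by
    have h : 1 + a^2 + b^2 ≤ 3*a^2 := by nlinarith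
    exact mul_le_mul_of_nonneg_left h hX
  have hc2 : (1:ℝ) ≤ c^2 := by nlinarith
  have h4 : (u^2+v^2)*(3*a^2) ≤ 3*(u^2+v^2)*c^2*a^2 := by
    nlinarith [mul_nonneg hX (sq_nonneg a)]
  linarith

theorem stmt_3 (p₁ p₂ : ℝ × ℝ) (h₁ : p₁ ∈ T) (h₂ : p₂ ∈ T) :
    Real.sqrt (((expBA p₁).1 - (expBA p₂).1)^2 + ((expBA p₁).2 - (expBA p₂).2)^2)
      ≤ (Real.sqrt 3 / 2) *
        Real.sqrt ((p₁.1 - p₂.1)^2 + (p₁.2 - p₂.2)^2) := by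
  obtain ⟨hk1, hk1', hl1, hl1', hs1⟩ := h₁
  obtain ⟨hk2, hk2', hl2, hl2', hs2⟩ := h₂
  set k₁ := p₁.1; set l₁ := p₁.2; set k₂ := p₂.1; set l₂ := p₂.2
  have hd1 : (0:ℝ) < k₁ + 1 := by linarith
  have hd2 : (0:ℝ) < k₂ + 1 := by linarith
  have key : ((expBA p₁).1 - (expBA p₂).1)^2 + ((expBA p₁).2 - (expBA p₂).2)^2
      ≤ 3/4 * ((k₁ - k₂)^2 + (l₁ - l₂)^2) := by
    simp only [expBA, expA, expB]
    have e1 : (k₁ + l₁ + 1) / (2 * (k₁ + 1)) - 1/2 - ((k₂ + l₂ + 1) / (2 * (k₂ + 1)) - 1/2)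
        = ((l₁ - l₂) * (k₂ + 1) - l₂ * (k₁ - k₂)) / (2 * (k₁ + 1) * (k₂ + 1)) := by
      field_simp; ring
    have e2 : k₁ / (2 * (k₁ + 1)) + 1/2 - (k₂ / (2 * (k₂ + 1)) + 1/2)
        = (k₁ - k₂) / (2 * (k₁ + 1) * (k₂ + 1)) := by
      field_simp; ring
    rw [e1, e2, div_pow, div_pow, ← add_div, div_le_iff₀ (by positivity)]
    have h := aux_contract (k₁ - k₂) (l₁ - l₂) (k₂ + 1) l₂ (k₁ + 1)
      (by linarith) (by linarith) (by linarith) (by linarith)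
    nlinarith [h]
  calc Real.sqrt (((expBA p₁).1 - (expBA p₂).1)^2 + ((expBA p₁).2 - (expBA p₂).2)^2)
      ≤ Real.sqrt (3/4 * ((k₁ - k₂)^2 + (l₁ - l₂)^2)) := Real.sqrt_le_sqrt key
    _ = Real.sqrt 3 / 2 * Real.sqrt ((k₁ - k₂)^2 + (l₁ - l₂)^2) := by
        rw [Real.sqrt_mul (by norm_num)]
        congr 1
        rw [show (3:ℝ)/4 = 3/4 from rfl, Real.sqrt_div (by norm_num : (0:ℝ) ≤ 3),
          show (4:ℝ) = 2^2 by norm_num, Real.sqrt_sq (by norm_num : (0:ℝ) ≤ 2)]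
end

section
/- For any p₁ in P' = (0,1/6)×(2/3,1) ∪ (1/6,1/2)×(1/2,2/3) ∪ {(1/6,2/3)} and any p₂ in the same set, A p₁ ≺ (1/6,2/3) ≺ BA p₂, where (k,l) ≺ (κ,λ) means k < κ and l > λ. -/
def S : Set (ℝ × ℝ) :=
  {(1/6, 2/3)} ∪ Set.Ioo (0:ℝ) (1/6) ×ˢ Set.Ioo (2/3 : ℝ) 1
    ∪ Set.Ioo (1/6 : ℝ) (1/2) ×ˢ Set.Ioo (1/2 : ℝ) (2/3)

lemma key_s11 (p : ℝ × ℝ) (h : p ∈ S) : (expA p).1 < 1/6 ∧ (expA p).2 > 2/3 := by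
  obtain ⟨x, y⟩ := p
  have hx : 0 < x ∧ x < 1/2 ∧ x + 1 < 3 * y := by
    rcases h with (h | h) | h
    · simp only [Set.mem_singleton_iff, Prod.mk.injEq] at h
      obtain ⟨hx, hy⟩ := h
      norm_num [hx, hy]
    · obtain ⟨⟨h1, h2⟩, h3, h4⟩ := h
      constructor; · exact h1
      constructor; · linarith
      linarith
    · obtain ⟨⟨h1, h2⟩, h3, h4⟩ := h
      exact ⟨by linarith, h2, by linarith⟩
  obtain ⟨h1, h2, h3⟩ := hx
  have hd : (0:ℝ) < 2 * (x + 1) := by linarith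
  simp only [expA]
  constructor
  · rw [div_lt_iff₀ hd]; linarith
  · rw [gt_iff_lt, lt_div_iff₀ hd]; linarith

theorem stmt_11 (p₁ p₂ : ℝ × ℝ) (h₁ : p₁ ∈ S) (h₂ : p₂ ∈ S) :
    ((expA p₁).1 < 1/6 ∧ (expA p₁).2 > 2/3) ∧
      (1/6 < (expBA p₂).1 ∧ 2/3 > (expBA p₂).2) := by
  obtain ⟨a1, a2⟩ := key_s11 p₁ h₁
  obtain ⟨b1, b2⟩ := key_s11 p₂ h₂
  refine ⟨⟨a1, a2⟩, ?_, ?_⟩ <;> simp only [expBA, expB] <;> linarith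
end
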